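/- arXiv:2003.11470 — 2 statements merged into one kernel-verified Lean document; each statement's English description precedes it below -/
import Mathlib

section
/- Let X₁,…,X_K be i.i.d. nonnegative real random variables with finite first and second moments. Then for any τ > 0, Pr[(1/K)∑_{k=1}^K X_k < (1−τ)E[X]] ≤ exp(−K τ² E[X]² / (2 E[X²])). -/
open MeasureTheory ProbabilityTheory

private lemma exp_neg_le_quad {u : ℝ} (hu : 0 ≤ u) :
    Real.exp (-u) ≤ 1 - u + u ^ 2 / 2 := by
  have h1 : 1 + u + u ^ 2 / 2 ≤ Real.exp u := Real.quadratic_le_exp_of_nonneg hu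
  have h2 : Real.exp (-u) * Real.exp u = 1 := by
    rw [← Real.exp_add]; simp
  have h3 : 0 < Real.exp (-u) := Real.exp_pos _
  have hQ : 0 < 1 + u + u ^ 2 / 2 := by positivity
  nlinarith [sq_nonneg (u * u), sq_nonneg u,
    mul_nonneg h3.le (sub_nonneg.2 h1)]

/-- Maurer's concentration inequality: for i.i.d. nonnegative real random variables
`X₁,…,X_K` with finite first and second moments, for any `τ > 0`,
`Pr[(1/K)∑ X_k < (1−τ)E[X]] ≤ exp(−K τ² E[X]² / (2 E[X²]))`. -/
theorem maurer_tail_bound {Ω : Type*} [MeasureSpace Ω] (P : Measure Ω) [IsProbabilityMeasure P]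
    (K : ℕ) (hK : 1 ≤ K) (X : Fin K → Ω → ℝ)
    (hmeas : ∀ k, Measurable (X k))
    (hnonneg : ∀ k, ∀ᵐ ω ∂P, 0 ≤ X k ω)
    (hindep : iIndepFun X P)
    (hident : ∀ k, IdentDistrib (X k) (X ⟨0, hK⟩) P P)
    (hL1 : Integrable (X ⟨0, hK⟩) P) (hL2 : Integrable (fun ω => (X ⟨0, hK⟩ ω) ^ 2) P)
    (τ : ℝ) (hτ : 0 < τ) :
    (P {ω | (1 / K : ℝ) * ∑ k, X k ω < (1 - τ) * ∫ ω, X ⟨0, hK⟩ ω ∂P}).toReal ≤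
      Real.exp (-(K * τ ^ 2 * (∫ ω, X ⟨0, hK⟩ ω ∂P) ^ 2) / (2 * ∫ ω, (X ⟨0, hK⟩ ω) ^ 2 ∂P)) := by
  set X0 := X ⟨0, hK⟩ with hX0
  set μ := ∫ ω, X0 ω ∂P with hμdef
  set m2 := ∫ ω, (X0 ω) ^ 2 ∂P with hm2def
  have hμ0 : 0 ≤ μ := integral_nonneg_of_ae (hnonneg _)
  have hm20 : 0 ≤ m2 := integral_nonneg fun ω => sq_nonneg _
  have htriv : (P {ω | (1 / K : ℝ) * ∑ k, X k ω < (1 - τ) * μ}).toReal ≤ 1 := by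
    rw [← ENNReal.toReal_one]
    exact ENNReal.toReal_mono ENNReal.one_ne_top prob_le_one
  by_cases hm2z : m2 = 0
  · refine htriv.trans_eq ?_
    rw [hm2z]
    simp
  by_cases hμz : μ = 0
  · refine htriv.trans_eq ?_
    rw [hμz]
    simp
  have hμpos : 0 < μ := lt_of_le_of_ne hμ0 (Ne.symm hμz)
  have hm2pos : 0 < m2 := lt_of_le_of_ne hm20 (Ne.symm hm2z)
  have hKpos : (0 : ℝ) < K := by exact_mod_cast Nat.lt_of_lt_of_le Nat.zero_lt_one hK
  set t := τ * μ / m2 with htdef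
  have htpos : 0 < t := by positivity
  -- the sum as a function
  have hsum_eq : (fun ω => ∑ k, X k ω) = ∑ k, X k := by
    funext ω; simp [Finset.sum_apply]
  have hSmeas : Measurable fun ω => ∑ k, X k ω :=
    Finset.measurable_sum Finset.univ fun i _ => hmeas i
  have hSnn : ∀ᵐ ω ∂P, 0 ≤ ∑ k, X k ω := by
    have := (MeasureTheory.ae_all_iff).2 hnonneg
    filter_upwards [this] with ω hω
    exact Finset.sum_nonneg fun i _ => hω i
  have hint : Integrable (fun ω => Real.exp (-t * ∑ k, X k ω)) P := by
    refine Integrable.mono' (integrable_const 1)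
      ((Real.measurable_exp.comp (hSmeas.const_mul (-t))).aestronglyMeasurable) ?_
    filter_upwards [hSnn] with ω hω
    rw [Real.norm_eq_abs, abs_of_pos (Real.exp_pos _)]
    exact Real.exp_le_one_iff.2 (by nlinarith)
  set ε := (K : ℝ) * ((1 - τ) * μ) with hεdef
  have hch := measure_le_le_exp_mul_mgf (μ := P) (X := fun ω => ∑ k, X k ω) ε
    (neg_nonpos.2 htpos.le) hint
  -- inclusion of events
  have hmono : P {ω | (1 / K : ℝ) * ∑ k, X k ω < (1 - τ) * μ}
      ≤ P {ω | ∑ k, X k ω ≤ ε} := by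
    refine measure_mono fun ω hω => ?_
    simp only [Set.mem_setOf_eq] at hω ⊢
    have h1 : (∑ k, X k ω) = (K : ℝ) * ((1 / K : ℝ) * ∑ k, X k ω) := by
      field_simp
    rw [h1, hεdef]
    exact (mul_le_mul_of_nonneg_left hω.le hKpos.le)
  have hLHS : (P {ω | (1 / K : ℝ) * ∑ k, X k ω < (1 - τ) * μ}).toReal
      ≤ Real.exp (- -t * ε) * mgf (fun ω => ∑ k, X k ω) P (-t) :=
    (ENNReal.toReal_mono (measure_ne_top P _) hmono).trans hch
  -- mgf of the sum is a power
  have hident_exp : ∀ k, mgf (X k) P (-t) = mgf X0 P (-t) := by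
    intro k
    exact ((hident k).comp ((measurable_id.const_mul (-t)).exp)).integral_eq
  have hprod : mgf (fun ω => ∑ k, X k ω) P (-t) = mgf X0 P (-t) ^ K := by
    rw [hsum_eq, hindep.mgf_sum hmeas Finset.univ]
    rw [Finset.prod_congr rfl fun k _ => hident_exp k, Finset.prod_const,
      Finset.card_univ, Fintype.card_fin]
  -- bound on the single-variable mgf
  have hintexp : Integrable (fun ω => Real.exp (-t * X0 ω)) P := by
    refine Integrable.mono' (integrable_const 1)
      ((Real.measurable_exp.comp ((hmeas _).const_mul (-t))).aestronglyMeasurable) ?_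
    filter_upwards [hnonneg ⟨0, hK⟩] with ω hω
    rw [Real.norm_eq_abs, abs_of_pos (Real.exp_pos _)]
    exact Real.exp_le_one_iff.2 (by nlinarith)
  have hintpoly : Integrable (fun ω => 1 - t * X0 ω + t ^ 2 / 2 * (X0 ω) ^ 2) P :=
    ((integrable_const (1 : ℝ)).sub (hL1.const_mul t)).add (hL2.const_mul (t ^ 2 / 2))
  have hmgf1 : mgf X0 P (-t) ≤ Real.exp (-t * μ + t ^ 2 / 2 * m2) := by
    have hA : mgf X0 P (-t) ≤ ∫ ω, (1 - t * X0 ω + t ^ 2 / 2 * (X0 ω) ^ 2) ∂P := by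
      refine integral_mono_ae hintexp hintpoly ?_
      filter_upwards [hnonneg ⟨0, hK⟩] with ω hω
      have hu : 0 ≤ t * X0 ω := mul_nonneg htpos.le hω
      have := exp_neg_le_quad hu
      calc Real.exp (-t * X0 ω) = Real.exp (-(t * X0 ω)) := by ring_nf
        _ ≤ 1 - t * X0 ω + (t * X0 ω) ^ 2 / 2 := exp_neg_le_quad hu
        _ = 1 - t * X0 ω + t ^ 2 / 2 * (X0 ω) ^ 2 := by ring
    have hB : ∫ ω, (1 - t * X0 ω + t ^ 2 / 2 * (X0 ω) ^ 2) ∂P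
        = 1 - t * μ + t ^ 2 / 2 * m2 := by
      have hsub : Integrable (fun ω => 1 - t * X0 ω) P :=
        (integrable_const (1 : ℝ)).sub (hL1.const_mul t)
      have hmul2 : Integrable (fun ω => t ^ 2 / 2 * (X0 ω) ^ 2) P :=
        hL2.const_mul (t ^ 2 / 2)
      have hmul1 : Integrable (fun ω => t * X0 ω) P := hL1.const_mul t
      rw [integral_add hsub hmul2, integral_sub (integrable_const (1 : ℝ)) hmul1,
        integral_const, integral_const_mul, integral_const_mul]
      simp [hμdef, hm2def]
    have hC : 1 + (-t * μ + t ^ 2 / 2 * m2) ≤ Real.exp (-t * μ + t ^ 2 / 2 * m2) := by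
      have := Real.add_one_le_exp (-t * μ + t ^ 2 / 2 * m2)
      linarith
    calc mgf X0 P (-t) ≤ 1 - t * μ + t ^ 2 / 2 * m2 := hA.trans_eq hB
      _ = 1 + (-t * μ + t ^ 2 / 2 * m2) := by ring
      _ ≤ _ := hC
  -- combine
  have hfinal : Real.exp (- -t * ε) * mgf (fun ω => ∑ k, X k ω) P (-t)
      ≤ Real.exp (-(K * τ ^ 2 * μ ^ 2) / (2 * m2)) := by
    rw [hprod]
    calc Real.exp (- -t * ε) * mgf X0 P (-t) ^ K
        ≤ Real.exp (- -t * ε) * Real.exp (-t * μ + t ^ 2 / 2 * m2) ^ K := by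
          gcongr
          exact mgf_nonneg
      _ = Real.exp (- -t * ε + K * (-t * μ + t ^ 2 / 2 * m2)) := by
          rw [← Real.exp_nat_mul, ← Real.exp_add]
      _ = Real.exp (-(K * τ ^ 2 * μ ^ 2) / (2 * m2)) := by
          congr 1
          rw [hεdef, htdef]
          field_simp
          ring
  exact hLHS.trans hfinal
end

section
/- Let ρ be a density matrix on ℂ^{2^n} with ρ ≤ (1+ε)2^{−n}I for some 0 ≤ ε ≤ 1, and let {Λ_y = α_y|φ_y⟩⟨φ_y|}_y be a rank-one POVM with α_y ≥ 0, unit vectors |φ_y⟩, and ∑_y α_y |φ_y⟩⟨φ_y| = I. Then ∑_y α_y = 2^n, the outcome distribution p(y) = α_y⟨φ_y|ρ|φ_y⟩ is a probability distribution, and its Shannon entropy satisfies H(p) ≥ n − log₂(1+ε) ≥ n − 2ε. -/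
open Matrix
open scoped ComplexOrder

private lemma trace_vecMulVec' {N : ℕ} (u : Fin N → ℂ) :
    (vecMulVec u (star u)).trace = star u ⬝ᵥ u := by
  simp [trace, vecMulVec_apply, dotProduct, diag, mul_comm]

private lemma trace_mul_vecMulVec' {N : ℕ} (ρ : Matrix (Fin N) (Fin N) ℂ) (u : Fin N → ℂ) :
    (ρ * vecMulVec u (star u)).trace = star u ⬝ᵥ ρ *ᵥ u := by
  simp [trace, mul_apply, vecMulVec_apply, dotProduct, mulVec, diag, Finset.mul_sum]
  congr 1; ext i; congr 1; ext j; ring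

private lemma quadSum' {N : ℕ} {Y : Type*} [Fintype Y] (A : Y → Matrix (Fin N) (Fin N) ℂ)
    (x : Fin N → ℂ) :
    star x ⬝ᵥ (∑ y, A y) *ᵥ x = ∑ y, star x ⬝ᵥ (A y) *ᵥ x := by
  simp only [mulVec, dotProduct, Matrix.sum_apply, Finset.mul_sum, Finset.sum_mul]
  trans ∑ x_1 : Fin N, ∑ i : Y, ∑ x_2 : Fin N, star x x_1 * (A i x_1 x_2 * x x_2)
  · exact Finset.sum_congr rfl fun i1 _ => Finset.sum_comm
  · exact Finset.sum_comm

private lemma quad_vecMulVec' {N : ℕ} (u x : Fin N → ℂ) :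
    star x ⬝ᵥ (vecMulVec u (star u)) *ᵥ x = (star x ⬝ᵥ u) * (star u ⬝ᵥ x) := by
  simp [vecMulVec_apply, dotProduct, mulVec, Finset.mul_sum, Finset.sum_mul]
  rw [Finset.sum_comm]
  congr 1; ext i; congr 1; ext j; ring

/-- For a density matrix `ρ` on `ℂ^(2^n)` with `ρ ≤ (1+ε)2⁻ⁿI` (`0 ≤ ε ≤ 1`) and a
rank-one POVM `{α_y |φ_y⟩⟨φ_y|}` resolving the identity, one has `∑_y α_y = 2ⁿ`, the
outcome distribution `p(y) = α_y⟨φ_y|ρ|φ_y⟩` is a probability distribution, and its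
Shannon entropy satisfies `H(p) ≥ n − log₂(1+ε) ≥ n − 2ε`. -/
theorem povm_outcome_entropy_bound {Y : Type*} [Fintype Y] (n : ℕ) (ε : ℝ)
    (hε0 : 0 ≤ ε) (hε1 : ε ≤ 1)
    (ρ : Matrix (Fin (2 ^ n)) (Fin (2 ^ n)) ℂ) (hρ : ρ.PosSemidef) (htr : ρ.trace = 1)
    (hle : ((((1 + ε) * ((2 : ℝ) ^ n)⁻¹ : ℝ) : ℂ) •
        (1 : Matrix (Fin (2 ^ n)) (Fin (2 ^ n)) ℂ) - ρ).PosSemidef)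
    (α : Y → ℝ) (hα : ∀ y, 0 ≤ α y)
    (φ : Y → Fin (2 ^ n) → ℂ) (hφ : ∀ y, star (φ y) ⬝ᵥ φ y = 1)
    (hcomplete : ∑ y, (α y : ℂ) • vecMulVec (φ y) (star (φ y)) =
      (1 : Matrix (Fin (2 ^ n)) (Fin (2 ^ n)) ℂ)) :
    ∑ y, α y = 2 ^ n ∧
      (∀ y, 0 ≤ α y * (star (φ y) ⬝ᵥ ρ *ᵥ (φ y)).re) ∧
      ∑ y, α y * (star (φ y) ⬝ᵥ ρ *ᵥ (φ y)).re = 1 ∧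
      n - Real.logb 2 (1 + ε) ≤
        -∑ y, (α y * (star (φ y) ⬝ᵥ ρ *ᵥ (φ y)).re) *
            Real.logb 2 (α y * (star (φ y) ⬝ᵥ ρ *ᵥ (φ y)).re) ∧
      (n : ℝ) - 2 * ε ≤ n - Real.logb 2 (1 + ε) := by
  set c : ℝ := (1 + ε) * ((2 : ℝ) ^ n)⁻¹ with hc
  have hc0 : 0 < c := by positivity
  set p : Y → ℝ := fun y => α y * (star (φ y) ⬝ᵥ ρ *ᵥ (φ y)).re with hp
  -- nonnegativity of q
  have hq0 : ∀ y, 0 ≤ (star (φ y) ⬝ᵥ ρ *ᵥ (φ y)).re := fun y => by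
    have := hρ.dotProduct_mulVec_nonneg (φ y)
    exact_mod_cast (Complex.le_def.mp this).1
  have hp0 : ∀ y, 0 ≤ p y := fun y => mul_nonneg (hα y) (hq0 y)
  -- sum of α
  have hA : (∑ y, (α y : ℂ)) = (2 : ℂ) ^ n := by
    have h := congrArg Matrix.trace hcomplete
    simp only [Matrix.trace_sum, Matrix.trace_smul, trace_vecMulVec', hφ, smul_eq_mul,
      mul_one, Matrix.trace_one] at h
    simpa using h
  have hsumα : ∑ y, α y = 2 ^ n := by exact_mod_cast hA
  -- α y ≤ 1
  have hα1 : ∀ y, α y ≤ 1 := by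
    intro y0
    have h := congrArg (fun A => star (φ y0) ⬝ᵥ A *ᵥ (φ y0)) hcomplete
    beta_reduce at h
    rw [quadSum'] at h
    simp only [Matrix.smul_mulVec, dotProduct_smul, quad_vecMulVec', one_mulVec,
      hφ, smul_eq_mul] at h
    -- rewrite each summand's dotProducts
    have h' := congrArg Complex.re h
    simp only [Complex.re_sum, Complex.mul_re, Complex.ofReal_re, Complex.ofReal_im,
      zero_mul, sub_zero, Complex.one_re] at h'
    have hterm : ∀ y, ((star (φ y0) ⬝ᵥ φ y) * (star (φ y) ⬝ᵥ φ y0)).re =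
        Complex.normSq (star (φ y) ⬝ᵥ φ y0) := by
      intro y
      rw [star_dotProduct]
      simp [Complex.normSq_apply, Complex.mul_re]
      try ring
    have key : ∑ y, α y * Complex.normSq (star (φ y) ⬝ᵥ φ y0) = 1 := by
      rw [← h']
      refine Finset.sum_congr rfl fun y _ => ?_
      rw [← hterm y, Complex.mul_re]
    have h1 : α y0 * Complex.normSq (star (φ y0) ⬝ᵥ φ y0) ≤ 1 := by
      rw [← key]
      exact Finset.single_le_sum
        (f := fun y => α y * Complex.normSq (star (φ y) ⬝ᵥ φ y0))
        (fun y _ => mul_nonneg (hα y) (Complex.normSq_nonneg _)) (Finset.mem_univ y0)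
    rw [hφ y0] at h1
    simpa using h1
  -- q y ≤ c
  have hqc : ∀ y, (star (φ y) ⬝ᵥ ρ *ᵥ (φ y)).re ≤ c := by
    intro y
    have h := hle.dotProduct_mulVec_nonneg (φ y)
    rw [Matrix.sub_mulVec, dotProduct_sub, Matrix.smul_mulVec, one_mulVec,
      dotProduct_smul, hφ y, smul_eq_mul, mul_one] at h
    have := (Complex.le_def.mp h).1
    simp only [Complex.zero_re, Complex.sub_re, Complex.ofReal_re] at this
    linarith
  have hpc : ∀ y, p y ≤ c := by
    intro y
    calc p y ≤ 1 * c := mul_le_mul (hα1 y) (hqc y) (hq0 y) zero_le_one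
    _ = c := one_mul c
  -- sum p = 1
  have hsump : ∑ y, p y = 1 := by
    have h := congrArg Matrix.trace (congrArg (fun A => ρ * A) hcomplete)
    simp only [Finset.mul_sum, Matrix.mul_smul, Matrix.trace_sum, Matrix.trace_smul,
      trace_mul_vecMulVec', mul_one, htr, smul_eq_mul] at h
    have h' := congrArg Complex.re h
    simp only [Complex.re_sum, Complex.mul_re, Complex.ofReal_re, Complex.ofReal_im,
      zero_mul, sub_zero, Complex.one_re] at h'
    exact h'
  refine ⟨hsumα, hp0, hsump, ?_, ?_⟩
  · -- entropy bound
    have hlogc : Real.logb 2 c = Real.logb 2 (1 + ε) - n := by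
      rw [hc, Real.logb_mul (by linarith) (by positivity), Real.logb_inv,
        Real.logb_pow, Real.logb_self_eq_one (by norm_num)]
      ring
    have hterm : ∀ y, p y * Real.logb 2 (p y) ≤ p y * Real.logb 2 c := by
      intro y
      rcases eq_or_lt_of_le (hp0 y) with h | h
      · simp [← h]
      · exact mul_le_mul_of_nonneg_left
          (Real.logb_le_logb_of_le one_lt_two h (hpc y)) (hp0 y)
    have hsum : ∑ y, p y * Real.logb 2 (p y) ≤ Real.logb 2 c := by
      calc ∑ y, p y * Real.logb 2 (p y) ≤ ∑ y, p y * Real.logb 2 c :=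
            Finset.sum_le_sum fun y _ => hterm y
        _ = (∑ y, p y) * Real.logb 2 c := by rw [Finset.sum_mul]
        _ = Real.logb 2 c := by rw [hsump, one_mul]
    rw [hlogc] at hsum
    linarith
  · -- logb 2 (1+ε) ≤ 2ε
    have h1 : Real.log (1 + ε) ≤ ε := by
      have := Real.log_le_sub_one_of_pos (x := 1 + ε) (by linarith)
      linarith
    have h2 : (0.6931471803 : ℝ) < Real.log 2 := Real.log_two_gt_d9
    have : Real.logb 2 (1 + ε) ≤ 2 * ε := by
      rw [Real.logb, div_le_iff₀ (by linarith)]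
      nlinarith
    linarith
end
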